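/- For every real-valued function f ∈ A(B) with f(x) ≥ 0 for all x ∈ X, there exists a monotonically nondecreasing sequence (f_n) of nonnegative functions f_n ∈ B that converges to f pointwise on X. -/

import Mathlib

open MeasureTheory Filter Topology BoundedContinuousFunction
open scoped ZeroAtInfty ENNReal

/-- The complexification of a bounded real-valued function: we regard a bounded real
function on `X` as a bounded complex function. (`X` carries the discrete topology, so
`X →ᵇ ℝ` is exactly the space of bounded real-valued functions on `X`.) -/
noncomputable def cplx {X : Type*} [TopologicalSpace X] (f : X →ᵇ ℝ) : X →ᵇ ℂ :=
  BoundedContinuousFunction.comp Complex.ofReal Complex.isometry_ofReal.lipschitz f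

/-- `A(B)`: the closure, in the supremum norm, of the complexification `B + iB` of a
set `B` of bounded real-valued functions, inside the C*-algebra of all bounded
complex-valued functions on `X`. -/
noncomputable def AofB {X : Type*} [TopologicalSpace X] (B : Set (X →ᵇ ℝ)) : Set (X →ᵇ ℂ) :=
  closure {a : X →ᵇ ℂ | ∃ f ∈ B, ∃ g ∈ B, a = cplx f + Complex.I • cplx g}
/-- For every real-valued function `f ∈ A(B)` with `f x ≥ 0` for all
`x ∈ X`, there exists a monotonically nondecreasing sequence `(f_n)` of nonnegative
functions `f_n ∈ B` converging to `f` pointwise on `X`.  (No nowhere-vanishing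
assumption on `B` is needed here.) -/
theorem exists_monotone_approx_of_nonneg {X : Type*} [Nonempty X] [TopologicalSpace X] [DiscreteTopology X]
    (B : Set (X →ᵇ ℝ))
    (hBadd : ∀ f ∈ B, ∀ g ∈ B, f + g ∈ B)
    (hBsmul : ∀ (c : ℝ), ∀ f ∈ B, c • f ∈ B)
    (hBmax : ∀ f ∈ B, ∀ g ∈ B, ∃ h ∈ B, ∀ x, h x = max (f x) (g x))
    (hBmin : ∀ f ∈ B, ∀ g ∈ B, ∃ h ∈ B, ∀ x, h x = min (f x) (g x))
    (hBmul : ∀ f ∈ B, ∀ g ∈ B, f * g ∈ B)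
    (hBstone : ∀ f ∈ B, ∃ h ∈ B, ∀ x, h x = min (f x) 1)
    (f : X →ᵇ ℂ) (hf : f ∈ AofB B) (hreal : ∀ x : X, (f x).im = 0)
    (hpos : ∀ x : X, 0 ≤ (f x).re) :
    ∃ u : ℕ → (X →ᵇ ℝ), (∀ n, u n ∈ B) ∧ (∀ n, ∀ x : X, 0 ≤ u n x) ∧
      (∀ n, ∀ x : X, u n x ≤ u (n + 1) x) ∧
      ∀ x : X, Tendsto (fun n => u n x) atTop (𝓝 ((f x).re)) := by
  classical
  -- truncation lemma via the Stone property
  have trunc : ∀ g ∈ B, ∀ ε : ℝ, 0 < ε → ∃ t ∈ B, ∀ x, t x = max (g x - ε) 0 := by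
    intro g hg ε hε
    obtain ⟨k, hk, hks⟩ := hBstone (ε⁻¹ • g) (hBsmul _ g hg)
    refine ⟨g + (-ε) • k, hBadd _ hg _ (hBsmul _ _ hk), fun x => ?_⟩
    have hkx := hks x
    simp only [BoundedContinuousFunction.coe_smul, Pi.smul_apply, smul_eq_mul] at hkx
    simp only [BoundedContinuousFunction.coe_add, BoundedContinuousFunction.coe_smul,
      Pi.add_apply, Pi.smul_apply, smul_eq_mul, hkx]
    rcases le_total (g x) ε with h | h
    · have h1 : ε⁻¹ * g x ≤ 1 := by
        rw [inv_mul_eq_div]; exact (div_le_one hε).2 h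
      rw [min_eq_left h1, max_eq_right (by linarith)]
      field_simp
      ring
    · have h1 : (1:ℝ) ≤ ε⁻¹ * g x := by
        rw [inv_mul_eq_div]; exact (one_le_div hε).2 h
      rw [min_eq_right h1, max_eq_left (by linarith)]
      ring
  -- approximants from the closure
  have approx : ∀ n : ℕ, ∃ g ∈ B, ∀ x, |(f x).re - g x| ≤ (1/2:ℝ)^n := by
    intro n
    have hn : (0:ℝ) < (1/2)^n := by positivity
    rw [AofB, Metric.mem_closure_iff] at hf
    obtain ⟨b, hb, hdist⟩ := hf ((1/2)^n) hn
    obtain ⟨p, hp, q, hq, rfl⟩ := hb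
    refine ⟨p, hp, fun x => ?_⟩
    have h2 : ((cplx p + Complex.I • cplx q) x).re = p x := by
      have e1 : (cplx p) x = ((p x : ℝ) : ℂ) := rfl
      have e2 : (cplx q) x = ((q x : ℝ) : ℂ) := rfl
      simp [e1, e2]
    calc |(f x).re - p x| = |(f x - (cplx p + Complex.I • cplx q) x).re| := by
          rw [Complex.sub_re, h2]
      _ ≤ ‖f x - (cplx p + Complex.I • cplx q) x‖ := Complex.abs_re_le_norm _
      _ = dist (f x) ((cplx p + Complex.I • cplx q) x) := (Complex.dist_eq _ _).symm
      _ ≤ dist f (cplx p + Complex.I • cplx q) :=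
          BoundedContinuousFunction.dist_coe_le_dist x
      _ ≤ (1/2)^n := hdist.le
  choose g hgB hgapx using approx
  choose v hvB hvspec using fun n =>
    trunc (g n) (hgB n) (2*(1/2)^n) (by positivity)
  have hv0 : ∀ n x, 0 ≤ v n x := fun n x => by rw [hvspec n x]; exact le_max_right _ _
  have hvle : ∀ n x, v n x ≤ (f x).re := by
    intro n x
    rw [hvspec n x]
    have h1 := abs_le.1 (hgapx n x)
    exact max_le (by linarith [h1.1]) (hpos x)
  have hvge : ∀ n x, (f x).re - 3*(1/2:ℝ)^n ≤ v n x := by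
    intro n x
    rw [hvspec n x]
    have h1 := abs_le.1 (hgapx n x)
    have : (f x).re - 3*(1/2:ℝ)^n ≤ g n x - 2*(1/2)^n := by linarith [h1.2]
    exact this.trans (le_max_left _ _)
  -- running maxima
  have hmaxS : ∀ (p q : {w : X →ᵇ ℝ // w ∈ B}), ∃ r : {w : X →ᵇ ℝ // w ∈ B},
      ∀ x, r.1 x = max (p.1 x) (q.1 x) := by
    rintro ⟨p, hp⟩ ⟨q, hq⟩
    obtain ⟨r, hr, hrs⟩ := hBmax p hp q hq
    exact ⟨⟨r, hr⟩, hrs⟩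
  choose M hM using hmaxS
  let U : ℕ → {w : X →ᵇ ℝ // w ∈ B} := fun n =>
    Nat.rec ⟨v 0, hvB 0⟩ (fun n p => M p ⟨v (n+1), hvB (n+1)⟩) n
  have hUdef : ∀ n, U (n+1) = M (U n) ⟨v (n+1), hvB (n+1)⟩ := fun n => rfl
  have hUsucc : ∀ n x, (U (n+1)).1 x = max ((U n).1 x) (v (n+1) x) := by
    intro n x
    rw [hUdef n]
    exact hM (U n) ⟨v (n+1), hvB (n+1)⟩ x
  have hUlow : ∀ n x, v n x ≤ (U n).1 x := by
    intro n x
    induction n with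
    | zero => exact le_of_eq rfl
    | succ n ih => rw [hUsucc n x]; exact le_max_right _ _
  have hUle : ∀ n x, (U n).1 x ≤ (f x).re := by
    intro n x
    induction n with
    | zero => exact hvle 0 x
    | succ n ih => rw [hUsucc n x]; exact max_le ih (hvle (n+1) x)
  refine ⟨fun n => (U n).1, fun n => (U n).2, ?_, ?_, ?_⟩
  · intro n x; exact (hv0 n x).trans (hUlow n x)
  · intro n x; rw [hUsucc n x]; exact le_max_left _ _
  · intro x
    have hlim : Tendsto (fun n => (f x).re - 3*(1/2:ℝ)^n) atTop (𝓝 ((f x).re)) := by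
      have h := tendsto_pow_atTop_nhds_zero_of_lt_one (by norm_num : (0:ℝ) ≤ 1/2)
        (by norm_num : (1/2:ℝ) < 1)
      have h2 : Tendsto (fun n : ℕ => (f x).re - 3*(1/2:ℝ)^n) atTop (𝓝 ((f x).re - 3*0)) :=
        tendsto_const_nhds.sub (h.const_mul 3)
      simpa using h2
    exact tendsto_of_tendsto_of_tendsto_of_le_of_le hlim tendsto_const_nhds
      (fun n => (hvge n x).trans (hUlow n x)) (fun n => hUle n x)
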